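/- Let q ∈ ℂ with q ≠ 0 and q² ≠ 1, and for m ∈ ℤ set [m] := (q^m − q^{−m})/(q − q⁻¹). Define μ(s,t) := [s]·[t]·[s−t]·[s+t] for s,t ∈ ℤ. Then for all integers s and t: μ(s+1, t) + μ(s−1, t) + μ(s, t+1) + μ(s, t−1) = [4]·μ(s,t). -/

import Mathlib

/-- Quantum integer `[m]_q = (q^m - q^{-m})/(q - q⁻¹)`. -/
noncomputable def qint (q : ℂ) (m : ℤ) : ℂ := (q ^ m - q ^ (-m)) / (q - q⁻¹)

/-- Frobenius–Perron weight `μ(s,t) = [s][t][s−t][s+t]`. -/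
noncomputable def fpWeight (q : ℂ) (s t : ℤ) : ℂ :=
  qint q s * qint q t * qint q (s - t) * qint q (s + t)

set_option maxHeartbeats 2000000 in
/-- The weights μ form an eigenvector with eigenvalue [4] of the adjacency
matrix of the charge-conjugation graph. -/
theorem fpWeight_eigenvector (q : ℂ) (hq0 : q ≠ 0) (hq2 : q ^ 2 ≠ 1)
    (s t : ℤ) :
    fpWeight q (s + 1) t + fpWeight q (s - 1) t +
      fpWeight q s (t + 1) + fpWeight q s (t - 1)
      = qint q 4 * fpWeight q s t := by
  have hd : q - q⁻¹ ≠ 0 := by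
    intro h
    apply hq2
    have := sub_eq_zero.mp h
    field_simp at this
    linear_combination this
  have hs : q ^ s ≠ 0 := zpow_ne_zero _ hq0
  have ht : q ^ t ≠ 0 := zpow_ne_zero _ hq0
  have h4 : qint q 4 = q ^ 3 + q + q⁻¹ + (q ^ 3)⁻¹ := by
    rw [qint, div_eq_iff hd]
    have h1 : q ^ (4 : ℤ) = q ^ (4 : ℕ) := zpow_ofNat q 4
    have h2 : q ^ (-4 : ℤ) = (q ^ (4 : ℕ))⁻¹ := by rw [zpow_neg, zpow_ofNat]
    rw [h1, h2]
    field_simp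
    ring
  rw [h4]
  simp only [fpWeight, qint, neg_add, neg_sub, zpow_neg,
    zpow_add₀ hq0, zpow_sub₀ hq0, zpow_one]
  generalize q ^ s = a at hs
  generalize q ^ t = b at ht
  generalize hq : q - q⁻¹ = d at hd
  have hq' : q⁻¹ = q - d := by linear_combination -hq
  have hrel : q ^ 2 - q * d = 1 := by
    have := mul_inv_cancel₀ hq0
    rw [hq'] at this
    linear_combination this
  rw [hq']
  field_simp
  subst hq
  field_simp
  ring
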